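/- Fix a real λ > 0 and x ∈ ℤ. With P(S_n = x) := 2^{−n} · |{ε ∈ {−1,1}^n : ε_1 + ⋯ + ε_n = x}| (simple random walk on ℤ), define for k ∈ ℕ the weights a_k := (λ^k / k!) · P(S_k = x) and b_k := ((λ/2)^k / k!) · 1{k ≡ x (mod 2)}. Then the series A := ∑_{k∈ℕ} a_k and B := ∑_{k∈ℕ} b_k converge and are strictly positive, and for every n ∈ ℕ, (∑_{k ≥ n} b_k) · A ≤ (∑_{k ≥ n} a_k) · B; that is, the probability distribution (b_k/B)_{k∈ℕ} is stochastically dominated by (a_k/A)_{k∈ℕ}. -/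

import Mathlib

open Finset

def cnt (n : ℕ) (x : ℤ) : ℕ :=
  (univ.filter (fun ε : Fin n → Bool =>
    ∑ i, (if ε i then (1 : ℤ) else -1) = x)).card

lemma cnt_le (n : ℕ) (x : ℤ) : cnt n x ≤ 2 ^ n := by
  have h := Finset.card_filter_le (univ : Finset (Fin n → Bool))
    (fun ε : Fin n → Bool => ∑ i, (if ε i then (1 : ℤ) else -1) = x)
  simpa [cnt, Finset.card_univ] using h

lemma cnt_parity {n : ℕ} {x : ℤ} (h : cnt n x ≠ 0) : (n : ℤ) % 2 = x % 2 := by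
  obtain ⟨ε, hε⟩ := Finset.card_ne_zero.mp h
  have hsum : ∑ i, (if ε i then (1 : ℤ) else -1) = x := (Finset.mem_filter.mp hε).2
  have key : x % 2 = (n : ℤ) % 2 := by
    rw [← hsum, Finset.sum_int_mod]
    have h1 : ∀ i, (if ε i then (1 : ℤ) else -1) % 2 = 1 := fun i => by
      split_ifs <;> decide
    simp [h1]
  exact key.symm

lemma cnt_step (n : ℕ) (x : ℤ) : cnt n x ≤ cnt (n + 2) x := by
  unfold cnt
  apply Finset.card_le_card_of_injOn (fun ε => Fin.append ε ![true, false])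
  · intro ε hε
    simp only [Finset.coe_filter, Set.mem_setOf_eq, Finset.mem_coe, Finset.mem_filter, Finset.mem_univ, true_and] at hε ⊢
    rw [Fin.sum_univ_add]
    simp [Fin.append_left, Fin.append_right, Fin.sum_univ_two, hε]
  · intro ε₁ _ ε₂ _ h
    funext i
    have := congrFun h (Fin.castAdd 2 i)
    simpa [Fin.append_left] using this

lemma cnt_mono {j k : ℕ} (x : ℤ) (hjk : j ≤ k) (hp : (j : ℤ) % 2 = (k : ℤ) % 2) :
    cnt j x ≤ cnt k x := by
  obtain ⟨m, rfl⟩ : ∃ m, k = j + 2 * m := ⟨(k - j) / 2, by omega⟩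
  clear hjk hp
  induction m with
  | zero => simp
  | succ m ih =>
    have h2 : j + 2 * (m + 1) = (j + 2 * m) + 2 := by ring
    rw [h2]
    exact le_trans ih (cnt_step _ x)

lemma cnt_natAbs_pos (x : ℤ) : 0 < cnt x.natAbs x := by
  unfold cnt
  rw [Finset.card_pos]
  rcases le_or_gt 0 x with h | h
  · refine ⟨fun _ => true, Finset.mem_filter.mpr ⟨Finset.mem_univ _, ?_⟩⟩
    have h1 : (∑ _i : Fin x.natAbs, if (true : Bool) = true then (1:ℤ) else -1)
        = (x.natAbs : ℤ) := by
      rw [Finset.sum_const, Finset.card_univ, Fintype.card_fin]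
      simp
    rw [h1]; omega
  · refine ⟨fun _ => false, Finset.mem_filter.mpr ⟨Finset.mem_univ _, ?_⟩⟩
    have h1 : (∑ _i : Fin x.natAbs, if (false : Bool) = true then (1:ℤ) else -1)
        = -(x.natAbs : ℤ) := by
      rw [Finset.sum_const, Finset.card_univ, Fintype.card_fin]
      simp
    rw [h1]; omega

/-- Conclusion of Lemma 3.7 (one-dimensional reformulation): with
`a k = (λ^k/k!) P(S_k = x)` and `b k = ((λ/2)^k/k!) 1{k ≡ x (mod 2)}`,
the series `A = ∑ a_k` and `B = ∑ b_k` converge and are strictly positive, and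
for every `n`, `(∑_{k ≥ n} b_k) A ≤ (∑_{k ≥ n} a_k) B`; that is, the normalized
distribution of `b` is stochastically dominated by that of `a`. -/
theorem lemma_3_7_st (lam : ℝ) (hlam : 0 < lam) (x : ℤ)
    (a b : ℕ → ℝ)
    (ha : ∀ n, a n = lam ^ n / n.factorial *
      (((univ.filter (fun ε : Fin n → Bool =>
        ∑ i, (if ε i then (1 : ℤ) else -1) = x)).card : ℝ) / 2 ^ n))
    (hb : ∀ n, b n = (lam / 2) ^ n / n.factorial *
      (if (n : ℤ) % 2 = x % 2 then 1 else 0)) :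
    Summable a ∧ Summable b ∧ 0 < ∑' k, a k ∧ 0 < ∑' k, b k ∧
      ∀ n : ℕ, (∑' k, b (k + n)) * (∑' k, a k) ≤ (∑' k, a (k + n)) * (∑' k, b k) := by
  have hw : ∀ n : ℕ, (0 : ℝ) < (lam / 2) ^ n / n.factorial := by
    intro n; positivity
  have ha' : ∀ n, a n = (lam / 2) ^ n / n.factorial * (cnt n x : ℝ) := by
    intro n
    rw [ha n, div_pow]
    unfold cnt
    ring
  have hanonneg : ∀ n, 0 ≤ a n := by
    intro n; rw [ha' n]; positivity
  have hbnonneg : ∀ n, 0 ≤ b n := by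
    intro n; rw [hb n]; split_ifs <;> positivity
  have hle : ∀ n, a n ≤ lam ^ n / n.factorial := by
    intro n
    rw [ha n]
    have h1 : ((univ.filter (fun ε : Fin n → Bool =>
        ∑ i, (if ε i then (1 : ℤ) else -1) = x)).card : ℝ) / 2 ^ n ≤ 1 := by
      rw [div_le_one (by positivity)]
      have := cnt_le n x
      unfold cnt at this
      exact_mod_cast this
    have h0 : (0:ℝ) ≤ lam ^ n / n.factorial := by positivity
    calc lam ^ n / n.factorial * _ ≤ lam ^ n / n.factorial * 1 :=
          mul_le_mul_of_nonneg_left h1 h0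
      _ = lam ^ n / n.factorial := mul_one _
  have hsa : Summable a :=
    Summable.of_nonneg_of_le hanonneg hle (Real.summable_pow_div_factorial lam)
  have hleb : ∀ n, b n ≤ (lam / 2) ^ n / n.factorial := by
    intro n
    rw [hb n]
    split_ifs
    · simp
    · simp [le_of_lt (hw n)]
  have hsb : Summable b :=
    Summable.of_nonneg_of_le hbnonneg hleb (Real.summable_pow_div_factorial (lam / 2))
  -- positivity of the sums
  have hN : (x.natAbs : ℤ) % 2 = x % 2 := by omega
  have hApos : 0 < ∑' k, a k := by
    refine Summable.tsum_pos hsa hanonneg x.natAbs ?_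
    rw [ha' x.natAbs]
    have := cnt_natAbs_pos x
    have : (0:ℝ) < (cnt x.natAbs x : ℝ) := by exact_mod_cast this
    exact mul_pos (hw _) this
  have hBpos : 0 < ∑' k, b k := by
    refine Summable.tsum_pos hsb hbnonneg x.natAbs ?_
    rw [hb x.natAbs, if_pos hN, mul_one]
    exact hw _
  refine ⟨hsa, hsb, hApos, hBpos, ?_⟩
  -- key likelihood ratio cross inequality
  have key : ∀ j k : ℕ, j ≤ k → b k * a j ≤ a k * b j := by
    intro j k hjk
    rw [ha' j, ha' k, hb j, hb k]
    have h2 : (if (k : ℤ) % 2 = x % 2 then (1:ℝ) else 0) * (cnt j x : ℝ) ≤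
        (cnt k x : ℝ) * (if (j : ℤ) % 2 = x % 2 then (1:ℝ) else 0) := by
      split_ifs with hk hj hj
      · rw [one_mul, mul_one]
        exact_mod_cast cnt_mono x hjk (by rw [hj, hk])
      · have hz : cnt j x = 0 := by
          by_contra hc
          exact hj (cnt_parity hc)
        simp [hz]
      · simp only [zero_mul, mul_one]
        positivity
      · simp
    calc (lam / 2) ^ k / k.factorial * (if (k : ℤ) % 2 = x % 2 then (1:ℝ) else 0) *
          ((lam / 2) ^ j / j.factorial * (cnt j x : ℝ))
        = ((lam / 2) ^ k / k.factorial * ((lam / 2) ^ j / j.factorial)) *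
          ((if (k : ℤ) % 2 = x % 2 then (1:ℝ) else 0) * (cnt j x : ℝ)) := by ring
      _ ≤ ((lam / 2) ^ k / k.factorial * ((lam / 2) ^ j / j.factorial)) *
          ((cnt k x : ℝ) * (if (j : ℤ) % 2 = x % 2 then (1:ℝ) else 0)) :=
          mul_le_mul_of_nonneg_left h2 (le_of_lt (mul_pos (hw k) (hw j)))
      _ = (lam / 2) ^ k / k.factorial * (cnt k x : ℝ) *
          ((lam / 2) ^ j / j.factorial * (if (j : ℤ) % 2 = x % 2 then (1:ℝ) else 0)) := by
          ring
  intro n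
  have hta : Summable (fun k => a (k + n)) := (summable_nat_add_iff n).mpr hsa
  have htb : Summable (fun k => b (k + n)) := (summable_nat_add_iff n).mpr hsb
  have hA : ∑' k, a k = (∑ j ∈ Finset.range n, a j) + ∑' k, a (k + n) :=
    (Summable.sum_add_tsum_nat_add n hsa).symm
  have hB : ∑' k, b k = (∑ j ∈ Finset.range n, b j) + ∑' k, b (k + n) :=
    (Summable.sum_add_tsum_nat_add n hsb).symm
  rw [hA, hB]
  set Ta := ∑' k, a (k + n) with hTa
  set Tb := ∑' k, b (k + n) with hTb
  set Ha := ∑ j ∈ Finset.range n, a j with hHa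
  set Hb := ∑ j ∈ Finset.range n, b j with hHb
  have core : Tb * Ha ≤ Ta * Hb := by
    have e1 : Tb * Ha = ∑' k, b (k + n) * Ha := tsum_mul_right.symm
    have e2 : Ta * Hb = ∑' k, a (k + n) * Hb := tsum_mul_right.symm
    rw [e1, e2]
    refine Summable.tsum_le_tsum ?_ (htb.mul_right Ha) (hta.mul_right Hb)
    intro k
    rw [hHa, hHb, Finset.mul_sum, Finset.mul_sum]
    refine Finset.sum_le_sum ?_
    intro j hj
    exact key j (k + n) (by have := Finset.mem_range.mp hj; omega)
  calc Tb * (Ha + Ta) = Tb * Ha + Ta * Tb := by ring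
    _ ≤ Ta * Hb + Ta * Tb := by linarith
    _ = Ta * (Hb + Tb) := by ring
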